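/- Let ℓ be a Laurent polynomial in d variables with positive integer coefficients, i.e. a finitely supported function c : ℤ^d → ℤ, not identically zero, with c(m) ≥ 1 for every m in its support, whose value at a point p of the open positive orthant (ℝ_{>0})^d is ℓ(p) = ∑_{m ∈ supp c} c(m) · ∏_{i<d} p_i^{m_i} (integer exponents). Then ℓ(p) ≥ 1 for every p ∈ (ℝ_{>0})^d if and only if the Newton polytope of ℓ — the convex hull in ℝ^d of the finite set supp c ⊆ ℤ^d ⊆ ℝ^d — contains the origin. -/

import Mathlib

/-- A Laurent polynomial in `d` variables with positive integer coefficients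
(given by a finitely supported, nonzero coefficient function `c : ℤ^d →₀ ℤ`
with `c m ≥ 1` on its support) has value `≥ 1` at every point of the open
positive orthant if and only if its Newton polytope (the convex hull of its
support in `ℝ^d`) contains the origin. -/
theorem laurent_ge_one_iff_newton_polytope_mem_zero
    (d : ℕ) (c : (Fin d → ℤ) →₀ ℤ) (hc : c ≠ 0)
    (hpos : ∀ m ∈ c.support, 1 ≤ c m) :
    (∀ p : Fin d → ℝ, (∀ i, 0 < p i) →
        1 ≤ ∑ m ∈ c.support, (c m : ℝ) * ∏ i, p i ^ (m i)) ↔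
      (0 : Fin d → ℝ) ∈
        convexHull ℝ ((fun m : Fin d → ℤ => fun i => (m i : ℝ)) ''
          (c.support : Set (Fin d → ℤ))) := by
  set g : (Fin d → ℤ) → (Fin d → ℝ) := fun m => fun i => (m i : ℝ) with hg
  have hg_inj : Function.Injective g := by
    intro a b hab
    funext i
    have := congrFun hab i
    simpa [hg] using this
  constructor
  · -- forward: contrapositive via separation
    intro h
    by_contra h0
    obtain ⟨f, u, hfu, hub⟩ :=
      geometric_hahn_banach_point_closed (convex_convexHull ℝ _)
        (((c.support : Set (Fin d → ℤ)).toFinite.image g).isClosed_convexHull (𝕜 := ℝ)) h0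
    have hu : 0 < u := by simpa using hfu
    have hfm : ∀ m ∈ c.support, u < f (g m) := fun m hm =>
      hub _ (subset_convexHull ℝ _ (Set.mem_image_of_mem g hm))
    set S : ℝ := ∑ m ∈ c.support, (c m : ℝ) with hS
    have hS0 : 0 ≤ S := Finset.sum_nonneg fun m hm => by
      have := hpos m hm; positivity
    set t : ℝ := (S + 1) ^ (u⁻¹ : ℝ) with ht
    have ht1 : 1 ≤ t := Real.one_le_rpow (by linarith) (by positivity)
    have ht0 : 0 < t := lt_of_lt_of_le one_pos ht1
    set p : Fin d → ℝ := fun i => t ^ (-(f (Pi.single i 1))) with hp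
    have hppos : ∀ i, 0 < p i := fun i => Real.rpow_pos_of_pos ht0 _
    have key : ∀ m ∈ c.support, (∏ i, p i ^ (m i)) ≤ t ^ (-u) := by
      intro m hm
      have h1 : (∏ i, p i ^ (m i)) = t ^ (- f (g m)) := by
        have : ∀ i, p i ^ (m i) = t ^ (-(f (Pi.single i 1)) * (m i : ℝ)) := by
          intro i
          rw [hp]
          rw [← Real.rpow_intCast (t ^ (-(f (Pi.single i 1)))) (m i),
            ← Real.rpow_mul ht0.le]
        rw [Finset.prod_congr rfl fun i _ => this i,
          ← Real.rpow_sum_of_pos ht0]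
        congr 1
        have := (f : (Fin d → ℝ) →ₗ[ℝ] ℝ).pi_apply_eq_sum_univ (g m)
        simp only [ContinuousLinearMap.coe_coe] at this
        rw [this, ← Finset.sum_neg_distrib]
        refine Finset.sum_congr rfl fun i _ => ?_
        have hsingle : (Pi.single i 1 : Fin d → ℝ) = fun j => if i = j then 1 else 0 := by
          funext j
          simp [Pi.single_apply, eq_comm]
        rw [hsingle]
        simp [hg, smul_eq_mul]
        ring
      rw [h1]
      exact Real.rpow_le_rpow_of_exponent_le ht1 (by linarith [hfm m hm])
    have hle : ∑ m ∈ c.support, (c m : ℝ) * ∏ i, p i ^ (m i) ≤ S * t ^ (-u) := by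
      rw [hS, Finset.sum_mul]
      refine Finset.sum_le_sum fun m hm => ?_
      have hcm : (0 : ℝ) ≤ (c m : ℝ) := by have := hpos m hm; positivity
      exact mul_le_mul_of_nonneg_left (key m hm) hcm
    have htu : t ^ (-u) = (S + 1)⁻¹ := by
      rw [ht, ← Real.rpow_mul (by linarith)]
      rw [inv_mul_eq_div, neg_div, div_self hu.ne', Real.rpow_neg_one]
    have : (1 : ℝ) ≤ S * (S + 1)⁻¹ := by
      rw [← htu]
      exact le_trans (h p hppos) hle
    rw [← div_eq_mul_inv, le_div_iff₀ (by linarith)] at this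
    linarith
  · -- backward: AM-GM
    intro h0 p hp
    rw [← Finset.coe_image, Finset.mem_convexHull'] at h0
    obtain ⟨w, hw0, hw1, hwsum⟩ := h0
    set W : (Fin d → ℤ) → ℝ := fun m => w (g m) with hW
    rw [Finset.sum_image (fun a _ b _ hab => hg_inj hab)] at hw1 hwsum
    have hW0 : ∀ m ∈ c.support, 0 ≤ W m := fun m hm =>
      hw0 _ (Finset.mem_image_of_mem g hm)
    have hW1le : ∀ m ∈ c.support, W m ≤ 1 := by
      intro m hm
      rw [← hw1]
      exact Finset.single_le_sum hW0 hm
    have hcomp : ∀ i, ∑ m ∈ c.support, (m i : ℝ) * W m = 0 := by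
      intro i
      have := congrFun hwsum i
      simp only [Finset.sum_apply, Pi.smul_apply, smul_eq_mul, Pi.zero_apply] at this
      rw [← this]
      exact Finset.sum_congr rfl fun m _ => by simp [hg, hW, mul_comm]
    set z : (Fin d → ℤ) → ℝ := fun m => ∏ i, p i ^ (m i) with hz
    have hzpos : ∀ m, 0 < z m := fun m =>
      Finset.prod_pos fun i _ => zpow_pos (hp i) _
    have hgm : (1 : ℝ) = ∏ m ∈ c.support, z m ^ (W m) := by
      have : ∀ m ∈ c.support, z m ^ (W m)
          = ∏ i, p i ^ ((m i : ℝ) * W m) := by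
        intro m hm
        rw [hz]
        rw [← Real.finset_prod_rpow _ _ (fun i _ => (zpow_pos (hp i) _).le)]
        refine Finset.prod_congr rfl fun i _ => ?_
        rw [← Real.rpow_intCast (p i) (m i), ← Real.rpow_mul (hp i).le]
      rw [Finset.prod_congr rfl this, Finset.prod_comm]
      rw [Finset.prod_congr rfl fun i (_ : i ∈ Finset.univ) =>
        (Real.rpow_sum_of_pos (hp i) _ _).symm]
      have : ∀ i : Fin d, (p i) ^ (∑ m ∈ c.support, (m i : ℝ) * W m) = 1 := by
        intro i
        rw [hcomp i, Real.rpow_zero]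
      simp [this]
    calc (1 : ℝ) = ∏ m ∈ c.support, z m ^ (W m) := hgm
      _ ≤ ∑ m ∈ c.support, W m * z m :=
          Real.geom_mean_le_arith_mean_weighted _ _ _ hW0 hw1
            (fun m _ => (hzpos m).le)
      _ ≤ ∑ m ∈ c.support, (c m : ℝ) * z m := by
          refine Finset.sum_le_sum fun m hm => ?_
          have h1 : W m ≤ (c m : ℝ) :=
            le_trans (hW1le m hm) (by exact_mod_cast hpos m hm)
          exact mul_le_mul_of_nonneg_right h1 (hzpos m).le
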